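/- The ESM GCM satisfies Set Inclusion: for any makespan function v that is nonnegative and monotone under set inclusion (S1), any finite set T of transactions, and any sets T1 ⊆ T2 of transactions disjoint from T with T1 nonempty, it holds that gas^ESM_{T∪T1}(T1) ≤ gas^ESM_{T∪T2}(T2). -/
import Mathlib


/-- The Equally-Split Makespan (ESM) GCM: `gas^ESM_T(tx) = v(T)/|T|`. -/
noncomputable def esmGas {Tx : Type} [DecidableEq Tx]
    (v : Finset Tx → ℝ) (T : Finset Tx) (_tx : Tx) : ℝ :=
  v T / (T.card : ℝ)

/-- The ESM GCM satisfies Set Inclusion: for any nonnegative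
makespan function `v` monotone under set inclusion (S1), any finite set `T` of
transactions, and any sets `T1 ⊆ T2` of transactions disjoint from `T` with
`T1` nonempty, `gas^ESM_{T∪T1}(T1) ≤ gas^ESM_{T∪T2}(T2)`. -/
theorem esmGas_set_inclusion
    {Tx : Type} [DecidableEq Tx]
    (v : Finset Tx → ℝ) (hvnonneg : ∀ S, 0 ≤ v S)
    -- (S1) monotonicity in T
    (hS1 : ∀ A B : Finset Tx, A ⊆ B → v A ≤ v B)
    (T T1 T2 : Finset Tx) (h12 : T1 ⊆ T2) (hdisj : Disjoint T T2)
    (hT1 : T1.Nonempty) :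
    ∑ tx ∈ T1, esmGas v (T ∪ T1) tx ≤ ∑ tx ∈ T2, esmGas v (T ∪ T2) tx := by
  classical
  have hd1 : Disjoint T T1 := hdisj.mono_right h12
  have hx : v (T ∪ T1) ≤ v (T ∪ T2) := hS1 _ _ (Finset.union_subset_union_right h12)
  have hb : 0 < T1.card := Finset.card_pos.mpr hT1
  have hbc : T1.card ≤ T2.card := Finset.card_le_card h12
  simp only [esmGas, Finset.sum_const, nsmul_eq_mul,
    Finset.card_union_of_disjoint hd1, Finset.card_union_of_disjoint hdisj]
  have h1 : (0:ℝ) < (T.card : ℝ) + T1.card := by positivity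
  have h2 : (0:ℝ) < (T.card : ℝ) + T2.card := by
    have : (0:ℝ) < (T2.card : ℝ) := by exact_mod_cast lt_of_lt_of_le hb hbc
    positivity
  have hbc' : (T1.card : ℝ) ≤ T2.card := by exact_mod_cast hbc
  push_cast
  rw [mul_div_assoc', mul_div_assoc', div_le_div_iff₀ h1 h2]
  nlinarith [mul_nonneg (mul_nonneg (sub_nonneg.mpr hbc') (Nat.cast_nonneg (α := ℝ) T.card)) (hvnonneg (T ∪ T2)),
    mul_nonneg (mul_nonneg (Nat.cast_nonneg (α := ℝ) T1.card) h2.le) (sub_nonneg.mpr hx)]
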